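/- Let d ≥ 2, let β ∈ [1/d, 1], and let λ : Fin d → ℝ be a probability vector (λᵢ ≥ 0, Σᵢ λᵢ = 1) satisfying Σᵢ √λᵢ = √(d·β). Set t := 1 − (1/d)·(√(1−β) − √(β·(d−1)))². Then Σᵢ λᵢ² ≤ t² + (1−t)²/(d−1). -/

import Mathlib

open scoped BigOperators

/-- Pointwise quartic bound: for `0 ≤ x ≤ y₁`, `0 ≤ y₂`,
`x⁴ ≤ A x² + B x + C` with the tangent coefficients. -/
lemma quartic_bound (x y1 y2 : ℝ) (hx : 0 ≤ x) (hxy : x ≤ y1) (hy2 : 0 ≤ y2) :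
    x ^ 4 ≤ (y1 ^ 2 + 2 * y1 * y2 + 3 * y2 ^ 2) * x ^ 2
      + (-(2 * y2 * (y1 + y2) ^ 2)) * x + y2 ^ 2 * (y1 ^ 2 + 2 * y1 * y2) := by
  have hprod : 0 ≤ (y1 - x) * (x - y2) ^ 2 * (x + y1 + 2 * y2) :=
    mul_nonneg (mul_nonneg (by linarith) (sq_nonneg _)) (by linarith)
  have hEq : ((y1 ^ 2 + 2 * y1 * y2 + 3 * y2 ^ 2) * x ^ 2
      + (-(2 * y2 * (y1 + y2) ^ 2)) * x + y2 ^ 2 * (y1 ^ 2 + 2 * y1 * y2)) - x ^ 4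
      = (y1 - x) * (x - y2) ^ 2 * (x + y1 + 2 * y2) := by ring
  linarith [hprod, hEq]

set_option maxHeartbeats 1000000 in
/-- For a probability vector `λ` on `Fin d` with `∑ᵢ √λᵢ = √(dβ)` and
`t = 1 − (1/d)(√(1−β) − √(β(d−1)))²`, one has `∑ᵢ λᵢ² ≤ t² + (1−t)²/(d−1)`. -/
theorem sum_sq_le_of_overlap (d : ℕ) (hd : 2 ≤ d)
    (β : ℝ) (hβ : β ∈ Set.Icc (1 / (d : ℝ)) 1)
    (lam : Fin d → ℝ) (hlam : ∀ i, 0 ≤ lam i) (hsum : ∑ i, lam i = 1)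
    (hs : ∑ i, Real.sqrt (lam i) = Real.sqrt (d * β))
    (t : ℝ)
    (ht : t = 1 - (1 / (d : ℝ)) *
      (Real.sqrt (1 - β) - Real.sqrt (β * ((d : ℝ) - 1))) ^ 2) :
    ∑ i, (lam i) ^ 2 ≤ t ^ 2 + (1 - t) ^ 2 / ((d : ℝ) - 1) := by
  have hd2 : (2 : ℝ) ≤ (d : ℝ) := by exact_mod_cast hd
  have hd0 : (0 : ℝ) < (d : ℝ) := by linarith
  have hd0' : ((d : ℝ)) ≠ 0 := ne_of_gt hd0
  have hd1 : (1 : ℝ) ≤ (d : ℝ) - 1 := by linarith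
  have hd1' : ((d : ℝ) - 1) ≠ 0 := by linarith
  obtain ⟨hβl, hβ1⟩ := hβ
  have hβ0 : 0 < β := lt_of_lt_of_le (by positivity) hβl
  have hβd : 1 ≤ β * d := by
    rw [div_le_iff₀ hd0] at hβl; linarith
  set a := Real.sqrt β with ha_def
  set p := Real.sqrt (1 - β) with hp_def
  set c := Real.sqrt ((d : ℝ) - 1) with hc_def
  set e := Real.sqrt (d : ℝ) with he_def
  have ha2 : a ^ 2 = β := Real.sq_sqrt hβ0.le
  have hp2 : p ^ 2 = 1 - β := Real.sq_sqrt (by linarith)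
  have hc2 : c ^ 2 = (d : ℝ) - 1 := Real.sq_sqrt (by linarith)
  have he2 : e ^ 2 = (d : ℝ) := Real.sq_sqrt hd0.le
  have ha0 : 0 ≤ a := Real.sqrt_nonneg _
  have hp0 : 0 ≤ p := Real.sqrt_nonneg _
  have hc0 : 0 < c := Real.sqrt_pos.2 (by linarith)
  have he0 : 0 < e := Real.sqrt_pos.2 hd0
  have hap : a ^ 2 + p ^ 2 = 1 := by rw [ha2, hp2]; ring
  -- rewrite the sqrt expressions
  have hsqmul : Real.sqrt (β * ((d : ℝ) - 1)) = a * c := Real.sqrt_mul hβ0.le _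
  have hsdb : Real.sqrt ((d : ℝ) * β) = e * a := Real.sqrt_mul hd0.le _
  rw [hsqmul] at ht
  rw [hsdb] at hs
  -- p ≤ a * c
  have hpac : p ≤ a * c := by
    have h1 : (1 : ℝ) - β ≤ β * ((d : ℝ) - 1) := by
      have hEq : β * ((d : ℝ) - 1) = β * (d : ℝ) - β := by ring
      linarith [hβd, hEq]
    calc p ≤ Real.sqrt (β * ((d : ℝ) - 1)) := Real.sqrt_le_sqrt h1
      _ = a * c := hsqmul
  -- key algebraic facts about t
  have hdt : (d : ℝ) * t = (a + p * c) ^ 2 := by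
    have h0 : (d : ℝ) * (1 - 1 / (d : ℝ) * (p - a * c) ^ 2) = (d : ℝ) - (p - a * c) ^ 2 := by
      field_simp
    rw [ht, h0]
    linear_combination (-1 - c ^ 2) * hap - hc2
  have hdt' : (d : ℝ) * (1 - t) = (a * c - p) ^ 2 := by
    rw [ht]; field_simp; ring
  set Y1 : ℝ := (a + p * c) / e with hY1_def
  set Y2 : ℝ := (a * c - p) / (e * c) with hY2_def
  have hY1_0 : 0 ≤ Y1 := by positivity
  have hY2_0 : 0 ≤ Y2 := div_nonneg (by linarith) (by positivity)
  have hY1sq : Y1 ^ 2 = t := by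
    rw [hY1_def, div_pow, he2, ← hdt]; field_simp
  have hY2sq : ((d : ℝ) - 1) * Y2 ^ 2 = 1 - t := by
    have h : Y2 ^ 2 = (a * c - p) ^ 2 / ((d : ℝ) * ((d : ℝ) - 1)) := by
      rw [hY2_def, div_pow, mul_pow, he2, hc2]
    rw [h, ← hdt']
    field_simp
  have hone : Y1 ^ 2 + ((d : ℝ) - 1) * Y2 ^ 2 = 1 := by
    rw [hY1sq, hY2sq]; ring
  have hsY : Y1 + ((d : ℝ) - 1) * Y2 = e * a := by
    rw [hY1_def, hY2_def]
    field_simp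
    linear_combination p * hc2 - a * c * he2
  -- the square roots of lam
  set x : Fin d → ℝ := fun i => Real.sqrt (lam i) with hx_def
  have hx2 : ∀ i, x i ^ 2 = lam i := fun i => Real.sq_sqrt (hlam i)
  have hx0 : ∀ i, 0 ≤ x i := fun i => Real.sqrt_nonneg _
  have hsum2 : ∑ i, x i ^ 2 = 1 := by
    rw [← hsum]; exact Finset.sum_congr rfl fun i _ => hx2 i
  -- Step A: every x i is at most Y1
  have hA : ∀ i, x i ≤ Y1 := by
    intro i
    have hmem := Finset.mem_univ i
    have hcard : ((Finset.univ.erase i).card : ℝ) = (d : ℝ) - 1 := by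
      rw [Finset.card_erase_of_mem hmem, Finset.card_univ, Fintype.card_fin]
      push_cast [Nat.cast_sub (by omega : 1 ≤ d)]
      ring
    have hrest : ∑ j ∈ Finset.univ.erase i, x j = e * a - x i := by
      have hadd : x i + ∑ j ∈ Finset.univ.erase i, x j = e * a := by
        rw [← hs]; exact Finset.add_sum_erase Finset.univ x hmem
      linarith
    have hrest2 : ∑ j ∈ Finset.univ.erase i, x j ^ 2 = 1 - x i ^ 2 := by
      have hadd : x i ^ 2 + ∑ j ∈ Finset.univ.erase i, x j ^ 2 = 1 := by
        rw [← hsum2]; exact Finset.add_sum_erase Finset.univ (fun j => x j ^ 2) hmem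
      linarith
    have hCS : (e * a - x i) ^ 2 ≤ ((d : ℝ) - 1) * (1 - x i ^ 2) := by
      have h := sq_sum_le_card_mul_sum_sq (s := Finset.univ.erase i) (f := x)
      calc (e * a - x i) ^ 2 = (∑ j ∈ Finset.univ.erase i, x j) ^ 2 := by rw [hrest]
        _ ≤ ((Finset.univ.erase i).card : ℝ) * ∑ j ∈ Finset.univ.erase i, x j ^ 2 := by
            exact_mod_cast h
        _ = ((d : ℝ) - 1) * (1 - x i ^ 2) := by rw [hcard, hrest2]
    have hCS2 : e ^ 2 * ((e * a - x i) ^ 2) ≤ e ^ 2 * (((d : ℝ) - 1) * (1 - x i ^ 2)) :=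
      mul_le_mul_of_nonneg_left hCS (sq_nonneg e)
    have he2pos : (0 : ℝ) < e ^ 2 := by positivity
    have hCS3 : (e * a - x i) ^ 2 ≤ (e ^ 2 - 1) * (1 - x i ^ 2) := by rw [he2]; exact hCS
    have hq : (e * x i) ^ 2 - 2 * a * (e * x i) + ((d : ℝ) * a ^ 2 - (d : ℝ) + 1) ≤ 0 := by
      rw [← he2]
      have h4 : e ^ 2 * ((e * x i) ^ 2 - 2 * a * (e * x i) + (e ^ 2 * a ^ 2 - e ^ 2 + 1)) ≤ 0 := by
        calc e ^ 2 * ((e * x i) ^ 2 - 2 * a * (e * x i) + (e ^ 2 * a ^ 2 - e ^ 2 + 1))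
            = e ^ 2 * ((e * a - x i) ^ 2 - (e ^ 2 - 1) * (1 - x i ^ 2)) := by ring
          _ ≤ 0 := mul_nonpos_of_nonneg_of_nonpos (sq_nonneg e) (by linarith)
      exact le_of_mul_le_mul_left (by linarith) he2pos
    have hkey : (d : ℝ) * a ^ 2 - (d : ℝ) + 1 = a ^ 2 - p ^ 2 * c ^ 2 := by
      linear_combination p ^ 2 * hc2 + ((d : ℝ) - 1) * hap
    rw [hY1_def, le_div_iff₀ he0]
    by_contra hcon
    push_neg at hcon
    have hcon' : a + p * c < e * x i := by
      linarith [hcon, mul_comm (x i) e]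
    have hprod : 0 < ((e * x i) - (a + p * c)) * ((e * x i) - (a - p * c)) :=
      mul_pos (by linarith) (by linarith [hcon', mul_nonneg hp0 hc0.le])
    have hEq2 : ((e * x i) - (a + p * c)) * ((e * x i) - (a - p * c))
        = (e * x i) ^ 2 - 2 * a * (e * x i) + (a ^ 2 - p ^ 2 * c ^ 2) := by ring
    linarith [hq, hkey, hprod, hEq2]
  -- Step B + C: sum the pointwise quartic bound
  set A : ℝ := Y1 ^ 2 + 2 * Y1 * Y2 + 3 * Y2 ^ 2 with hA_def
  set B : ℝ := -(2 * Y2 * (Y1 + Y2) ^ 2) with hB_def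
  set C : ℝ := Y2 ^ 2 * (Y1 ^ 2 + 2 * Y1 * Y2) with hC_def
  have hpt : ∀ i, lam i ^ 2 ≤ A * x i ^ 2 + B * x i + C := by
    intro i
    have := quartic_bound (x i) Y1 Y2 (hx0 i) (hA i) hY2_0
    calc lam i ^ 2 = x i ^ 4 := by rw [← hx2 i]; ring
      _ ≤ _ := this
  calc ∑ i, lam i ^ 2 ≤ ∑ i, (A * x i ^ 2 + B * x i + C) :=
        Finset.sum_le_sum fun i _ => hpt i
    _ = A * (∑ i, x i ^ 2) + B * (∑ i, x i) + (d : ℝ) * C := by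
        rw [Finset.sum_add_distrib, Finset.sum_add_distrib, ← Finset.mul_sum,
          ← Finset.mul_sum, Finset.sum_const, Finset.card_univ, Fintype.card_fin,
          nsmul_eq_mul]
    _ = A * 1 + B * (e * a) + (d : ℝ) * C := by rw [hsum2, hs]
    _ = Y1 ^ 4 + ((d : ℝ) - 1) * Y2 ^ 4 := by
        rw [hA_def, hB_def, hC_def]
        linear_combination (-(Y1 ^ 2 + 2 * Y1 * Y2 + 3 * Y2 ^ 2)) * hone
          + (2 * Y2 * (Y1 + Y2) ^ 2) * hsY
    _ = t ^ 2 + (1 - t) ^ 2 / ((d : ℝ) - 1) := by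
        rw [← hY2sq, ← hY1sq]
        field_simp
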